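/- arXiv:2110.07988 — 2 statements merged into one kernel-verified Lean document; each statement's English description precedes it below -/
import Mathlib

section
/- Let Λ ⊂ ℤ be a set and let S ⊂ [0,1) be a measurable set. Then the system E(Λ) is a frame for L²(S) if and only if the system E(ℤ \ Λ) is a Riesz sequence in L²([0,1) \ S). -/
open MeasureTheory Real Set
open scoped Classical

/-- The exponential function `e^{2πiλx}`. -/
noncomputable def expf (l : ℝ) : ℝ → ℂ :=
  fun x => Complex.exp (2 * (Real.pi : ℂ) * Complex.I * (l : ℂ) * (x : ℂ))

/-- The system `E(Λ) = {e^{2πiλx} : λ ∈ Λ}` is a Riesz sequence in `L²(S)`: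
there are `0 < A ≤ B < ∞` such that
`A‖c‖² ≤ ‖∑ c_λ e^{2πiλ·}‖²_{L²(S)} ≤ B‖c‖²` for all (finitely supported) coefficients. -/
def IsRieszSeqExp (Λ S : Set ℝ) : Prop :=
  ∃ A B : ℝ, 0 < A ∧ A ≤ B ∧
    ∀ c : ↥Λ →₀ ℂ,
      (A * ∑ l ∈ c.support, ‖c l‖ ^ 2 ≤
          ∫ x in S, ‖∑ l ∈ c.support, c l * expf (l : ℝ) x‖ ^ 2) ∧
      (∫ x in S, ‖∑ l ∈ c.support, c l * expf (l : ℝ) x‖ ^ 2 ≤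
          B * ∑ l ∈ c.support, ‖c l‖ ^ 2)

/-- The system `E(Λ)` is a frame for `L²(S)`: there are `0 < A ≤ B < ∞` such that
`A‖f‖² ≤ ∑_{λ∈Λ} |⟨f, e^{2πiλ·}⟩|² ≤ B‖f‖²` for all `f ∈ L²(S)`. -/
def IsFrameExp (Λ S : Set ℝ) : Prop :=
  ∃ A B : ℝ, 0 < A ∧ A ≤ B ∧
    ∀ f : ℝ → ℂ, MemLp f 2 (volume.restrict S) →
      (A * ∫ x in S, ‖f x‖ ^ 2 ≤
          ∑' l : ↥Λ, ‖∫ x in S, f x * (starRingEnd ℂ) (expf (l : ℝ) x)‖ ^ 2) ∧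
      (∑' l : ↥Λ, ‖∫ x in S, f x * (starRingEnd ℂ) (expf (l : ℝ) x)‖ ^ 2 ≤
          B * ∫ x in S, ‖f x‖ ^ 2)

/-- The system `E(Λ)` is complete in `L²(S)`. -/
def IsCompleteExp (Λ S : Set ℝ) : Prop :=
  ∀ f : ℝ → ℂ, MemLp f 2 (volume.restrict S) →
    (∀ l ∈ Λ, (∫ x in S, f x * (starRingEnd ℂ) (expf l x)) = 0) →
    ∀ᵐ x ∂(volume.restrict S), f x = 0

/-- The system `E(Λ)` is a Riesz basis for `L²(S)`: a complete Riesz sequence. -/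
def IsRieszBasisExp (Λ S : Set ℝ) : Prop :=
  IsRieszSeqExp Λ S ∧ IsCompleteExp Λ S

/-- `A_{≥n}(N,S) = {t ∈ [0,1/N) : t + k/N ∈ S for at least n values of k ∈ {0,…,N-1}}`. -/
def Ageq (N : ℕ) (S : Set ℝ) (n : ℕ) : Set ℝ :=
  {t : ℝ | t ∈ Set.Ico (0 : ℝ) (1 / (N : ℝ)) ∧
    n ≤ ((Finset.range N).filter (fun k => t + (k : ℝ) / (N : ℝ) ∈ S)).card}

open scoped ENNReal

section helpers

open Complex

lemma continuous_expf (l : ℝ) : Continuous (expf l) := by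
  unfold expf; fun_prop

lemma norm_expf (l x : ℝ) : ‖expf l x‖ = 1 := by
  unfold expf
  rw [Complex.norm_exp]
  have : (2 * (Real.pi : ℂ) * Complex.I * (l : ℂ) * (x : ℂ)).re = 0 := by
    simp [Complex.mul_re, Complex.mul_im]
  rw [this, Real.exp_zero]

lemma conj_expf (l x : ℝ) :
    (starRingEnd ℂ) (expf l x) = expf (-l) x := by
  unfold expf
  rw [← Complex.exp_conj]
  congr 1
  simp only [map_mul, Complex.conj_I, Complex.conj_ofReal, map_ofNat]
  push_cast
  ring

lemma expf_mul (a b x : ℝ) : expf a x * expf b x = expf (a + b) x := by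
  unfold expf
  rw [← Complex.exp_add]
  congr 1
  push_cast
  ring

lemma integral_expf (k : ℤ) :
    (∫ x in Ico (0:ℝ) 1, expf (k : ℝ) x) = if k = 0 then 1 else 0 := by
  rw [Measure.restrict_congr_set Ico_ae_eq_Ioc]
  by_cases hk : k = 0
  · subst hk
    simp only [if_pos rfl]
    have : ∀ x : ℝ, expf ((0:ℤ) : ℝ) x = 1 := by
      intro x; unfold expf; simp
    rw [setIntegral_congr_fun measurableSet_Ioc (fun x _ => this x)]
    simp
  · rw [if_neg hk]
    have hc : (2 * (Real.pi : ℂ) * Complex.I * (k : ℂ)) ≠ 0 := by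
      apply mul_ne_zero
      apply mul_ne_zero
      apply mul_ne_zero
      · norm_num
      · simpa using Real.pi_ne_zero
      · exact Complex.I_ne_zero
      · exact_mod_cast hk
    have : (∫ x in Ioc (0:ℝ) 1, expf (k:ℝ) x) = ∫ x in (0:ℝ)..1, Complex.exp ((2 * (Real.pi : ℂ) * Complex.I * (k : ℂ)) * x) := by
      rw [intervalIntegral.integral_of_le zero_le_one]
      rfl
    rw [this, integral_exp_mul_complex hc]
    have h1 : (2 * (Real.pi : ℂ) * Complex.I * (k : ℂ)) * ((1:ℝ) : ℂ) = (k : ℂ) * (2 * (Real.pi : ℂ) * Complex.I) := by push_cast; ring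
    rw [h1, Complex.exp_int_mul_two_pi_mul_I]
    simp

lemma orth_expf (n m : ℤ) :
    (∫ x in Ico (0:ℝ) 1, expf (n : ℝ) x * (starRingEnd ℂ) (expf (m : ℝ) x))
      = if n = m then 1 else 0 := by
  have h : ∀ x : ℝ, expf (n : ℝ) x * (starRingEnd ℂ) (expf (m : ℝ) x)
      = expf (((n - m : ℤ) : ℝ)) x := by
    intro x
    rw [conj_expf, expf_mul]
    push_cast
    ring_nf
  simp_rw [h]
  rw [integral_expf]
  simp [sub_eq_zero]

end helpers

section poly
open Complex

variable {ι : Type*}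

/-- finite-measure instance helper -/
lemma finMeas {S : Set ℝ} (hS : S ⊆ Ico (0:ℝ) 1) :
    IsFiniteMeasure (volume.restrict S) := by
  constructor
  rw [Measure.restrict_apply_univ]
  exact lt_of_le_of_lt (measure_mono hS) (by simp)

lemma integrableOn_mul_conj_expf {S : Set ℝ} (hS : S ⊆ Ico (0:ℝ) 1)
    (hSm : MeasurableSet S) (q : ℝ → ℂ) (hq : Integrable q (volume.restrict S)) (m : ℤ) :
    Integrable (fun x => q x * (starRingEnd ℂ) (expf (m : ℝ) x)) (volume.restrict S) := by
  have := hq.bdd_mul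
    ((Complex.continuous_conj.comp (continuous_expf ((m:ℝ)))).aestronglyMeasurable)
    (c := 1) (Filter.Eventually.of_forall fun x => by rw [Function.comp_apply, RCLike.norm_conj, norm_expf])
  simpa [mul_comm] using this

lemma integrableOn_expf_mul_conj {S : Set ℝ} (hS : S ⊆ Ico (0:ℝ) 1) (hSm : MeasurableSet S)
    (n m : ℝ) :
    Integrable (fun x => expf n x * (starRingEnd ℂ) (expf m x)) (volume.restrict S) := by
  haveI := finMeas hS
  apply Integrable.mono' (g := fun _ => (1:ℝ)) (integrable_const 1)
  · exact ((continuous_expf _).mul (Complex.continuous_conj.comp (continuous_expf _))).aestronglyMeasurable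
  · exact Filter.Eventually.of_forall fun x => by
      rw [norm_mul, RCLike.norm_conj, norm_expf, norm_expf, one_mul]

/-- expand `∫ q * conj(poly)` -/
lemma integral_mul_conj_poly {S : Set ℝ} (hS : S ⊆ Ico (0:ℝ) 1) (hSm : MeasurableSet S)
    (q : ℝ → ℂ) (hq : Integrable q (volume.restrict S)) (s : Finset ι) (ν : ι → ℤ) (c : ι → ℂ) :
    (∫ x in S, q x * (starRingEnd ℂ) (∑ i ∈ s, c i * expf (ν i : ℝ) x))
      = ∑ i ∈ s, (starRingEnd ℂ) (c i) * ∫ x in S, q x * (starRingEnd ℂ) (expf (ν i : ℝ) x) := by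
  have h : ∀ x : ℝ, q x * (starRingEnd ℂ) (∑ i ∈ s, c i * expf (ν i : ℝ) x)
      = ∑ i ∈ s, (starRingEnd ℂ) (c i) * (q x * (starRingEnd ℂ) (expf (ν i : ℝ) x)) := by
    intro x
    rw [map_sum, Finset.mul_sum]
    refine Finset.sum_congr rfl fun i _ => ?_
    rw [map_mul]; ring
  simp_rw [h]
  rw [integral_finset_sum]
  · exact Finset.sum_congr rfl fun i _ => integral_const_mul _ _
  · intro i _
    exact (integrableOn_mul_conj_expf hS hSm q hq (ν i)).const_mul _

lemma coeff_poly (s : Finset ι) (ν : ι → ℤ) (c : ι → ℂ) (m : ℤ) :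
    (∫ x in Ico (0:ℝ) 1, (∑ i ∈ s, c i * expf (ν i : ℝ) x) * (starRingEnd ℂ) (expf (m : ℝ) x))
      = ∑ i ∈ s, if ν i = m then c i else 0 := by
  have h : ∀ x : ℝ, (∑ i ∈ s, c i * expf (ν i : ℝ) x) * (starRingEnd ℂ) (expf (m : ℝ) x)
      = ∑ i ∈ s, c i * (expf (ν i : ℝ) x * (starRingEnd ℂ) (expf (m : ℝ) x)) := by
    intro x; rw [Finset.sum_mul]; exact Finset.sum_congr rfl fun i _ => by ring
  simp_rw [h]
  rw [integral_finset_sum]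
  · refine Finset.sum_congr rfl fun i _ => ?_
    rw [integral_const_mul, orth_expf]
    split_ifs <;> simp
  · intro i _
    exact (integrableOn_expf_mul_conj Subset.rfl measurableSet_Ico _ _).const_mul _

/-- L² norm of a trigonometric polynomial with distinct integer frequencies. -/
lemma l2_poly (s : Finset ι) (ν : ι → ℤ) (hν : Set.InjOn ν s) (c : ι → ℂ) :
    (∫ x in Ico (0:ℝ) 1, ‖∑ i ∈ s, c i * expf (ν i : ℝ) x‖ ^ 2)
      = ∑ i ∈ s, ‖c i‖ ^ 2 := by
  set p : ℝ → ℂ := fun x => ∑ i ∈ s, c i * expf (ν i : ℝ) x with hp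
  have hpc : Continuous p := by
    apply continuous_finset_sum
    exact fun i _ => (continuous_const.mul (continuous_expf _))
  have hnorm : ∀ x, ‖p x‖ ^ 2 = (p x * (starRingEnd ℂ) (p x)).re := by
    intro x
    rw [Complex.mul_conj, Complex.ofReal_re, Complex.normSq_eq_norm_sq]
  have hq : Integrable p (volume.restrict (Ico (0:ℝ) 1)) := by
    haveI := finMeas (Subset.rfl : Ico (0:ℝ) 1 ⊆ _)
    refine Integrable.mono' (integrable_const (∑ i ∈ s, ‖c i‖)) hpc.aestronglyMeasurable
      (Filter.Eventually.of_forall fun x => ?_)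
    refine le_trans (norm_sum_le _ _) (Finset.sum_le_sum fun i _ => ?_)
    rw [norm_mul, norm_expf, mul_one]
  have hint : Integrable (fun x => p x * (starRingEnd ℂ) (p x)) (volume.restrict (Ico (0:ℝ) 1)) := by
    have := hq.bdd_mul (Complex.continuous_conj.comp hpc).aestronglyMeasurable
      (c := ∑ i ∈ s, ‖c i‖) (Filter.Eventually.of_forall fun x => by
        rw [Function.comp_apply, RCLike.norm_conj]
        refine le_trans (norm_sum_le _ _) (Finset.sum_le_sum fun i _ => ?_)
        rw [norm_mul, norm_expf, mul_one])
    simpa [mul_comm] using this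
  rw [integral_congr_ae (Filter.Eventually.of_forall hnorm)]
  rw [← RCLike.re_eq_complex_re, integral_re hint, RCLike.re_eq_complex_re]
  have key : (∫ x in Ico (0:ℝ) 1, p x * (starRingEnd ℂ) (p x))
      = ∑ i ∈ s, (starRingEnd ℂ) (c i) * c i := by
    have h2 : ∀ x : ℝ, p x * (starRingEnd ℂ) (p x)
        = ∑ i ∈ s, (starRingEnd ℂ) (c i) * (p x * (starRingEnd ℂ) (expf (ν i : ℝ) x)) := by
      intro x
      rw [hp]
      simp only
      rw [map_sum, Finset.mul_sum]
      refine Finset.sum_congr rfl fun i _ => ?_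
      rw [map_mul]; ring
    simp_rw [h2]
    rw [integral_finset_sum]
    · refine Finset.sum_congr rfl fun i hi => ?_
      rw [integral_const_mul, hp]
      simp only
      rw [coeff_poly s ν c (ν i)]
      have : ∑ j ∈ s, (if ν j = ν i then c j else 0) = c i := by
        rw [Finset.sum_eq_single i]
        · simp
        · intro j hj hji
          rw [if_neg (fun h => hji (hν hj hi h))]
        · intro h; exact absurd hi h
      rw [this]
    · intro i _
      exact (integrableOn_mul_conj_expf Subset.rfl measurableSet_Ico p hq (ν i)).const_mul _
  rw [key, Complex.re_sum]
  refine Finset.sum_congr rfl fun i _ => ?_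
  rw [mul_comm, Complex.mul_conj, Complex.ofReal_re, Complex.normSq_eq_norm_sq]

end poly

section parseval
open Complex

lemma fourier_eq_conj_expf (n : ℤ) (x : ℝ) :
    @fourier 1 (-n) (x : AddCircle (1:ℝ)) = (starRingEnd ℂ) (expf (n : ℝ) x) := by
  rw [fourier_coe_apply, conj_expf]
  unfold expf
  congr 1
  push_cast
  ring

lemma parseval_exp (g : ℝ → ℂ) (hgm : StronglyMeasurable g)
    (hg : MemLp g 2 (volume.restrict (Ico (0:ℝ) 1))) :
    Summable (fun n : ℤ => ‖∫ x in Ico (0:ℝ) 1, g x * (starRingEnd ℂ) (expf (n:ℝ) x)‖ ^ 2) ∧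
    (∑' n : ℤ, ‖∫ x in Ico (0:ℝ) 1, g x * (starRingEnd ℂ) (expf (n:ℝ) x)‖ ^ 2)
      = ∫ x in Ico (0:ℝ) 1, ‖g x‖ ^ 2 := by
  haveI : Fact ((0:ℝ) < 1) := ⟨one_pos⟩
  set G : AddCircle (1:ℝ) → ℂ := AddCircle.liftIco 1 0 g with hGdef
  have hGx : ∀ x ∈ Ico (0:ℝ) 1, G (x : ℝ) = g x := by
    intro x hx
    exact AddCircle.liftIco_coe_apply (by simpa using hx)
  have hGmeas : Measurable G := by
    have : G = (fun y : Ico (0:ℝ) (0 + 1) => g y) ∘ (AddCircle.measurableEquivIco 1 0) := rfl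
    rw [this]
    exact (hgm.measurable.comp measurable_subtype_coe).comp
      (AddCircle.measurableEquivIco 1 0).measurable
  have hvol : (volume : Measure (AddCircle (1:ℝ))) = AddCircle.haarAddCircle := by
    rw [AddCircle.volume_eq_smul_haarAddCircle]
    simp
  have hmp : MeasurePreserving ((↑) : ℝ → AddCircle (1:ℝ))
      (volume.restrict (Ioc (0:ℝ) 1)) AddCircle.haarAddCircle := by
    have := AddCircle.measurePreserving_mk 1 0
    rw [zero_add] at this
    rwa [hvol] at this
  have hrest : volume.restrict (Ioc (0:ℝ) 1) = volume.restrict (Ico (0:ℝ) 1) :=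
    (Measure.restrict_congr_set Ico_ae_eq_Ioc).symm
  have haeG : (fun x : ℝ => G ↑x) =ᵐ[volume.restrict (Ico (0:ℝ) 1)] g := by
    filter_upwards [ae_restrict_mem measurableSet_Ico] with x hx
    exact hGx x hx
  have hG : MemLp G 2 AddCircle.haarAddCircle := by
    constructor
    · exact hGmeas.aestronglyMeasurable
    · rw [← eLpNorm_comp_measurePreserving hGmeas.aestronglyMeasurable hmp]
      rw [hrest]
      calc eLpNorm ((fun x : ℝ => G ↑x)) 2 (volume.restrict (Ico (0:ℝ) 1))
          = eLpNorm g 2 (volume.restrict (Ico (0:ℝ) 1)) := eLpNorm_congr_ae haeG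
        _ < ⊤ := hg.2
  set F2 : Lp ℂ 2 AddCircle.haarAddCircle := hG.toLp G with hF2def
  have hcoef : ∀ n : ℤ, fourierCoeff (F2 : AddCircle (1:ℝ) → ℂ) n
      = ∫ x in Ico (0:ℝ) 1, g x * (starRingEnd ℂ) (expf (n:ℝ) x) := by
    intro n
    have h1 : fourierCoeff (F2 : AddCircle (1:ℝ) → ℂ) n = fourierCoeff G n := by
      unfold fourierCoeff
      refine integral_congr_ae ?_
      filter_upwards [hG.coeFn_toLp] with t ht
      rw [ht]
    rw [h1, fourierCoeff]
    have h2 : (∫ t : AddCircle (1:ℝ), @fourier 1 (-n) t • G t ∂AddCircle.haarAddCircle)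
        = ∫ x in Ioc (0:ℝ) (0+1), @fourier 1 (-n) (x : AddCircle (1:ℝ)) • G (x : ℝ) := by
      rw [← hvol, AddCircle.integral_preimage 1 0 (fun t => @fourier 1 (-n) t • G t)]
    rw [h2, zero_add, hrest]
    refine integral_congr_ae ?_
    filter_upwards [ae_restrict_mem measurableSet_Ico] with x hx
    rw [hGx x hx, fourier_eq_conj_expf, smul_eq_mul, mul_comm]
  have hsum2 : ∑' n : ℤ, ‖fourierCoeff (F2 : AddCircle (1:ℝ) → ℂ) n‖ ^ 2
      = ∫ x in Ico (0:ℝ) 1, ‖g x‖ ^ 2 := by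
    rw [tsum_sq_fourierCoeff F2]
    have h3 : (∫ t : AddCircle (1:ℝ), ‖F2 t‖ ^ 2 ∂AddCircle.haarAddCircle)
        = ∫ t : AddCircle (1:ℝ), ‖G t‖ ^ 2 ∂AddCircle.haarAddCircle := by
      refine integral_congr_ae ?_
      filter_upwards [hG.coeFn_toLp] with t ht
      rw [ht]
    have h4 : (∫ t : AddCircle (1:ℝ), ‖G t‖ ^ 2 ∂AddCircle.haarAddCircle)
        = ∫ x in Ioc (0:ℝ) (0+1), ‖G ((x:ℝ) : AddCircle (1:ℝ))‖ ^ 2 := by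
      rw [← hvol, AddCircle.integral_preimage 1 0 (fun t => ‖G t‖ ^ 2)]
    rw [h3, h4, zero_add, hrest]
    refine integral_congr_ae ?_
    filter_upwards [ae_restrict_mem measurableSet_Ico] with x hx
    rw [hGx x hx]
  have hsummable : Summable (fun n : ℤ => ‖fourierCoeff (F2 : AddCircle (1:ℝ) → ℂ) n‖ ^ 2) := by
    have hm : Memℓp (fun i => fourierBasis.repr F2 i) 2 := (fourierBasis.repr F2).property
    have := (memℓp_gen_iff (p := 2) (by norm_num)).mp hm
    have h5 : ∀ i : ℤ, ‖fourierBasis.repr F2 i‖ ^ ((2:ℝ≥0∞).toReal)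
        = ‖fourierCoeff (F2 : AddCircle (1:ℝ) → ℂ) i‖ ^ (2:ℕ) := by
      intro i
      rw [fourierBasis_repr,
        show ((2:ℝ≥0∞).toReal) = ((2:ℕ):ℝ) by norm_num, Real.rpow_natCast]
    simp_rw [h5] at this
    exact this
  constructor
  · refine hsummable.congr fun n => ?_
    rw [hcoef n]
  · calc (∑' n : ℤ, ‖∫ x in Ico (0:ℝ) 1, g x * (starRingEnd ℂ) (expf (n:ℝ) x)‖ ^ 2)
        = ∑' n : ℤ, ‖fourierCoeff (F2 : AddCircle (1:ℝ) → ℂ) n‖ ^ 2 :=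
          tsum_congr fun n => by rw [hcoef n]
      _ = ∫ x in Ico (0:ℝ) 1, ‖g x‖ ^ 2 := hsum2
end parseval

lemma cs_integral {S : Set ℝ} (f p : ℝ → ℂ)
    (hf : MemLp f 2 (volume.restrict S)) (hp : MemLp p 2 (volume.restrict S)) :
    ‖∫ x in S, f x * (starRingEnd ℂ) (p x)‖ ^ 2
      ≤ (∫ x in S, ‖f x‖ ^ 2) * ∫ x in S, ‖p x‖ ^ 2 := by
  set μ := volume.restrict S
  set F : Lp ℂ 2 μ := hf.toLp f with hF
  set P : Lp ℂ 2 μ := hp.toLp p with hP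
  have hinner : (inner ℂ P F : ℂ) = ∫ x in S, f x * (starRingEnd ℂ) (p x) := by
    rw [MeasureTheory.L2.inner_def]
    refine integral_congr_ae ?_
    filter_upwards [hf.coeFn_toLp, hp.coeFn_toLp] with x hx1 hx2
    rw [RCLike.inner_apply, hx1, hx2, mul_comm]
  have hnF : ‖F‖ ^ 2 = ∫ x in S, ‖f x‖ ^ 2 := by
    rw [← inner_self_eq_norm_sq (𝕜 := ℂ)]
    rw [MeasureTheory.L2.inner_def, ← integral_re (L2.integrable_inner F F)]
    refine integral_congr_ae ?_
    filter_upwards [hf.coeFn_toLp] with x hx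
    rw [inner_self_eq_norm_sq (𝕜 := ℂ), hx]
  have hnP : ‖P‖ ^ 2 = ∫ x in S, ‖p x‖ ^ 2 := by
    rw [← inner_self_eq_norm_sq (𝕜 := ℂ)]
    rw [MeasureTheory.L2.inner_def, ← integral_re (L2.integrable_inner P P)]
    refine integral_congr_ae ?_
    filter_upwards [hp.coeFn_toLp] with x hx
    rw [inner_self_eq_norm_sq (𝕜 := ℂ), hx]
  calc ‖∫ x in S, f x * (starRingEnd ℂ) (p x)‖ ^ 2 = ‖(inner ℂ P F : ℂ)‖ ^ 2 := by rw [hinner]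
    _ ≤ (‖P‖ * ‖F‖) ^ 2 := by
        have := norm_inner_le_norm (𝕜 := ℂ) P F
        exact pow_le_pow_left₀ (norm_nonneg _) this 2
    _ = (∫ x in S, ‖f x‖ ^ 2) * ∫ x in S, ‖p x‖ ^ 2 := by
        rw [mul_pow, hnP, hnF]; ring

lemma split_integral {S : Set ℝ} (hSm : MeasurableSet S) (hS : S ⊆ Ico (0:ℝ) 1)
    (h : ℝ → ℝ) (hint : IntegrableOn h (Ico (0:ℝ) 1)) :
    (∫ x in Ico (0:ℝ) 1, h x) = (∫ x in S, h x) + ∫ x in Ico (0:ℝ) 1 \ S, h x := by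
  rw [← setIntegral_union]
  · rw [union_diff_cancel hS]
  · exact disjoint_sdiff_right
  · exact measurableSet_Ico.diff hSm
  · exact hint.mono_set (by exact hS)
  · exact hint.mono_set diff_subset

section more

lemma restrict_restrict_self {S : Set ℝ} (hSm : MeasurableSet S) (hS : S ⊆ Ico (0:ℝ) 1) :
    (volume.restrict (Ico (0:ℝ) 1)).restrict S = volume.restrict S := by
  rw [Measure.restrict_restrict hSm, inter_eq_self_of_subset_left hS]

lemma memℒp_poly {S : Set ℝ} (hS : S ⊆ Ico (0:ℝ) 1) {ι : Type*} (s : Finset ι)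
    (ν : ι → ℝ) (c : ι → ℂ) :
    MemLp (fun x => ∑ i ∈ s, c i * expf (ν i) x) 2 (volume.restrict S) := by
  haveI := finMeas hS
  have hb : ∀ x : ℝ, ‖∑ i ∈ s, c i * expf (ν i) x‖ ≤ ∑ i ∈ s, ‖c i‖ := by
    intro x
    refine le_trans (norm_sum_le _ _) (Finset.sum_le_sum fun i _ => ?_)
    rw [norm_mul, norm_expf, mul_one]
  have hcont : Continuous (fun x => ∑ i ∈ s, c i * expf (ν i) x) :=
    continuous_finset_sum _ fun i _ => continuous_const.mul (continuous_expf _)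
  exact (memLp_top_of_bound hcont.aestronglyMeasurable _
    (Filter.Eventually.of_forall hb)).mono_exponent le_top

lemma integrable_norm_sq {S : Set ℝ} (q : ℝ → ℂ) (hq : MemLp q 2 (volume.restrict S)) :
    Integrable (fun x => ‖q x‖ ^ 2) (volume.restrict S) := by
  have := hq.integrable_norm_rpow two_ne_zero ENNReal.ofNat_ne_top
  refine this.congr (Filter.Eventually.of_forall fun x => ?_)
  simp only
  rw [show ((2:ℝ≥0∞).toReal) = ((2:ℕ):ℝ) by norm_num, Real.rpow_natCast]

/-- Parseval over a subset `S` of `[0,1)`. -/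
lemma parseval_on (S : Set ℝ) (hSm : MeasurableSet S) (hS : S ⊆ Ico (0:ℝ) 1)
    (f : ℝ → ℂ) (hf : MemLp f 2 (volume.restrict S)) :
    Summable (fun n : ℤ => ‖∫ x in S, f x * (starRingEnd ℂ) (expf (n:ℝ) x)‖ ^ 2) ∧
    (∑' n : ℤ, ‖∫ x in S, f x * (starRingEnd ℂ) (expf (n:ℝ) x)‖ ^ 2)
      = ∫ x in S, ‖f x‖ ^ 2 := by
  set q : ℝ → ℂ := hf.1.mk f with hqdef
  have hfq : f =ᵐ[volume.restrict S] q := hf.1.ae_eq_mk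
  have hqsm : StronglyMeasurable q := hf.1.stronglyMeasurable_mk
  have hq : MemLp q 2 (volume.restrict S) := hf.ae_eq hfq
  set g : ℝ → ℂ := S.indicator q with hgdef
  have hgsm : StronglyMeasurable g := hqsm.indicator hSm
  have hg : MemLp g 2 (volume.restrict (Ico (0:ℝ) 1)) := by
    rw [hgdef, memLp_indicator_iff_restrict hSm, restrict_restrict_self hSm hS]
    exact hq
  obtain ⟨hsum, heq⟩ := parseval_exp g hgsm hg
  have hβ : ∀ n : ℤ, (∫ x in Ico (0:ℝ) 1, g x * (starRingEnd ℂ) (expf (n:ℝ) x))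
      = ∫ x in S, f x * (starRingEnd ℂ) (expf (n:ℝ) x) := by
    intro n
    have h1 : ∀ x : ℝ, g x * (starRingEnd ℂ) (expf (n:ℝ) x)
        = S.indicator (fun y => q y * (starRingEnd ℂ) (expf (n:ℝ) y)) x := by
      intro x
      rw [hgdef]
      by_cases hx : x ∈ S <;> simp [indicator_of_mem, indicator_of_notMem, hx]
    simp_rw [h1]
    rw [integral_indicator hSm, restrict_restrict_self hSm hS]
    refine integral_congr_ae ?_
    filter_upwards [hfq] with x hx
    rw [hx]
  have hN : (∫ x in Ico (0:ℝ) 1, ‖g x‖ ^ 2) = ∫ x in S, ‖f x‖ ^ 2 := by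
    have h1 : ∀ x : ℝ, ‖g x‖ ^ 2 = S.indicator (fun y => ‖q y‖ ^ 2) x := by
      intro x
      rw [hgdef]
      by_cases hx : x ∈ S <;> simp [indicator_of_mem, indicator_of_notMem, hx]
    simp_rw [h1]
    rw [integral_indicator hSm, restrict_restrict_self hSm hS]
    refine integral_congr_ae ?_
    filter_upwards [hfq] with x hx
    rw [hx]
  constructor
  · refine hsum.congr fun n => ?_
    rw [hβ n]
  · calc (∑' n : ℤ, ‖∫ x in S, f x * (starRingEnd ℂ) (expf (n:ℝ) x)‖ ^ 2)
        = ∑' n : ℤ, ‖∫ x in Ico (0:ℝ) 1, g x * (starRingEnd ℂ) (expf (n:ℝ) x)‖ ^ 2 :=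
          tsum_congr fun n => by rw [hβ n]
      _ = ∫ x in Ico (0:ℝ) 1, ‖g x‖ ^ 2 := heq
      _ = ∫ x in S, ‖f x‖ ^ 2 := hN

end more

section main

lemma castinj : Function.Injective (fun m : ℤ => (m : ℝ)) := fun a b h => Int.cast_injective h

lemma tsum_image_int (E : Set ℤ) (G : ℝ → ℝ) :
    (∑' l : ↥((fun m : ℤ => (m:ℝ)) '' E), G (l:ℝ)) = ∑' n : ↥E, G ((n:ℤ):ℝ) := by
  rw [← Equiv.tsum_eq (Equiv.Set.image _ E castinj) (fun l => G (l:ℝ))]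
  refine tsum_congr fun n => ?_
  simp

/-- complex integral of `q * conj q` over `S` -/
lemma integral_mul_conj_self {S : Set ℝ} (q : ℝ → ℂ) :
    (∫ x in S, q x * (starRingEnd ℂ) (q x)) = ((∫ x in S, ‖q x‖ ^ 2 : ℝ) : ℂ) := by
  calc (∫ x in S, q x * (starRingEnd ℂ) (q x))
      = ∫ x in S, ((‖q x‖ ^ 2 : ℝ) : ℂ) := by
        refine integral_congr_ae (Filter.Eventually.of_forall fun x => ?_)
        simp only
        rw [Complex.mul_conj, Complex.normSq_eq_norm_sq]
    _ = ((∫ x in S, ‖q x‖ ^ 2 : ℝ) : ℂ) := integral_ofReal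

lemma riesz_reform {Λc T : Set ℝ} {A : ℝ}
    (h : ∀ c : ↥Λc →₀ ℂ, A * ∑ l ∈ c.support, ‖c l‖ ^ 2 ≤
        ∫ x in T, ‖∑ l ∈ c.support, c l * expf (l : ℝ) x‖ ^ 2)
    (s : Finset ↥Λc) (b : ↥Λc → ℂ) :
    A * ∑ l ∈ s, ‖b l‖ ^ 2 ≤ ∫ x in T, ‖∑ l ∈ s, b l * expf (l : ℝ) x‖ ^ 2 := by
  classical
  set c : ↥Λc →₀ ℂ := Finsupp.onFinset s (fun l => if l ∈ s then b l else 0) (fun a ha => by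
    by_contra hmem; simp [hmem] at ha) with hc
  have happ : ∀ l, c l = if l ∈ s then b l else 0 := fun l => rfl
  have hsub : c.support ⊆ s := Finsupp.support_onFinset_subset
  have h1 : ∑ l ∈ c.support, ‖c l‖ ^ 2 = ∑ l ∈ s, ‖b l‖ ^ 2 := by
    rw [Finset.sum_subset hsub (fun x _ hnx => by
      rw [Finsupp.notMem_support_iff.mp hnx]; simp)]
    exact Finset.sum_congr rfl fun l hl => by rw [happ, if_pos hl]
  have h2 : ∀ x : ℝ, (∑ l ∈ c.support, c l * expf (l : ℝ) x) = ∑ l ∈ s, b l * expf (l : ℝ) x := by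
    intro x
    rw [Finset.sum_subset hsub (fun y _ hny => by
      rw [Finsupp.notMem_support_iff.mp hny]; simp)]
    exact Finset.sum_congr rfl fun l hl => by rw [happ, if_pos hl]
  have := h c
  rw [h1] at this
  simpa only [h2] using this

lemma forward (Λ : Set ℤ) (S : Set ℝ) (hSm : MeasurableSet S) (hS : S ⊆ Ico (0:ℝ) 1)
    (h : IsFrameExp ((fun m : ℤ => (m : ℝ)) '' Λ) S) :
    IsRieszSeqExp ((fun m : ℤ => (m : ℝ)) '' (Λᶜ : Set ℤ)) (Ico (0:ℝ) 1 \ S) := by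
  classical
  obtain ⟨A, B, hA, hAB, hfr⟩ := h
  haveI := finMeas hS
  set Λc : Set ℝ := (fun m : ℤ => (m : ℝ)) '' (Λᶜ : Set ℤ) with hΛc
  refine ⟨min A 1, 1, lt_min hA one_pos, min_le_right _ _, ?_⟩
  intro c
  have hex : ∀ l : ↥Λc, ∃ m : ℤ, m ∈ (Λᶜ : Set ℤ) ∧ ((m:ℝ)) = (l:ℝ) := fun l => l.2
  choose ν hν1 hν2 using hex
  have hνinj : Function.Injective ν := fun a b hab =>
    Subtype.ext (by rw [← hν2 a, ← hν2 b, hab])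
  set s := c.support with hs
  set p : ℝ → ℂ := fun x => ∑ l ∈ s, (c l) * expf (l : ℝ) x with hp
  have hpeq : ∀ x, p x = ∑ l ∈ s, (c l) * expf ((ν l : ℤ) : ℝ) x := fun x =>
    Finset.sum_congr rfl fun l _ => by rw [hν2 l]
  have hpfun : p = fun x => ∑ l ∈ s, (c l) * expf ((ν l : ℤ) : ℝ) x := funext hpeq
  set Sc : ℝ := ∑ l ∈ s, ‖c l‖ ^ 2 with hSc
  have hScnn : 0 ≤ Sc := Finset.sum_nonneg fun l _ => sq_nonneg _
  -- MemLp facts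
  have hmem2 : MemLp p 2 (volume.restrict S) := by
    rw [hpfun]; exact memℒp_poly hS s _ _
  have hmemIco : MemLp p 2 (volume.restrict (Ico (0:ℝ) 1)) := by
    rw [hpfun]; exact memℒp_poly Subset.rfl s _ _
  set IS : ℝ := ∫ x in S, ‖p x‖ ^ 2 with hIS
  set IT : ℝ := ∫ x in Ico (0:ℝ) 1 \ S, ‖p x‖ ^ 2 with hIT
  have hISnn : 0 ≤ IS := integral_nonneg fun x => sq_nonneg _
  have hITnn : 0 ≤ IT := integral_nonneg fun x => sq_nonneg _
  have htotal : (∫ x in Ico (0:ℝ) 1, ‖p x‖ ^ 2) = Sc := by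
    rw [hpfun, hSc]
    exact l2_poly s (fun l => (ν l : ℤ)) (hνinj.injOn) _
  have hsplit : Sc = IS + IT := by
    rw [← htotal]
    exact split_integral hSm hS _ (integrable_norm_sq p hmemIco)
  -- frame inequality applied to p
  have hframe := (hfr p hmem2).1
  -- Parseval on S for p
  obtain ⟨hsummable, htot⟩ := parseval_on S hSm hS p hmem2
  set β2 : ℤ → ℝ := fun n => ‖∫ x in S, p x * (starRingEnd ℂ) (expf (n:ℝ) x)‖ ^ 2 with hβ2
  have hβ2nn : ∀ n, 0 ≤ β2 n := fun n => sq_nonneg _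
  -- convert the frame tsum
  have hconv : (∑' l : ↥((fun m : ℤ => (m : ℝ)) '' Λ),
      ‖∫ x in S, p x * (starRingEnd ℂ) (expf (l : ℝ) x)‖ ^ 2) = ∑' n : ↥Λ, β2 n :=
    tsum_image_int Λ (fun y => ‖∫ x in S, p x * (starRingEnd ℂ) (expf y x)‖ ^ 2)
  rw [hconv] at hframe
  have hsplitsum : (∑' n : ↥Λ, β2 n) + (∑' n : ↥(Λᶜ : Set ℤ), β2 n) = IS := by
    rw [Summable.tsum_add_tsum_compl (hsummable.subtype _) (hsummable.subtype _)]
    exact htot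
  have hcompl_nonneg : 0 ≤ ∑' n : ↥(Λᶜ : Set ℤ), β2 n := tsum_nonneg fun n => hβ2nn _
  have hbound : (∑' n : ↥(Λᶜ : Set ℤ), β2 n) ≤ (1 - min A 1) * IS := by
    have h1 : min A 1 * IS ≤ A * IS := mul_le_mul_of_nonneg_right (min_le_left _ _) hISnn
    nlinarith [hframe]
  -- Cauchy–Schwarz step
  set a : ↥Λc → ℂ := fun l => ∫ x in S, p x * (starRingEnd ℂ) (expf ((ν l : ℤ) : ℝ) x) with ha
  have hISre : IS = (∑ l ∈ s, (starRingEnd ℂ) (c l) * a l).re := by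
    have h1 : ((IS : ℝ) : ℂ) = ∑ l ∈ s, (starRingEnd ℂ) (c l) * a l := by
      rw [hIS, ← integral_mul_conj_self p]
      have h2 : ∀ x : ℝ, p x * (starRingEnd ℂ) (p x)
          = p x * (starRingEnd ℂ) (∑ l ∈ s, (c l) * expf ((ν l : ℤ) : ℝ) x) := fun x => by
        rw [← hpeq x]
      simp_rw [h2]
      exact integral_mul_conj_poly hS hSm p (hmem2.integrable one_le_two) s _ _
    rw [← h1, Complex.ofReal_re]
  have hstep1 : IS ≤ ∑ l ∈ s, ‖c l‖ * ‖a l‖ := by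
    rw [hISre]
    refine le_trans (Complex.re_le_norm _) ?_
    refine le_trans (norm_sum_le _ _) (Finset.sum_le_sum fun l _ => ?_)
    rw [norm_mul, RCLike.norm_conj]
  have hstep2 : (∑ l ∈ s, ‖c l‖ * ‖a l‖) ^ 2 ≤ Sc * ∑ l ∈ s, ‖a l‖ ^ 2 := by
    rw [hSc]
    exact Finset.sum_mul_sq_le_sq_mul_sq s _ _
  have hstep3 : (∑ l ∈ s, ‖a l‖ ^ 2) ≤ ∑' n : ↥(Λᶜ : Set ℤ), β2 n := by
    have hj : ∀ l : ↥Λc, (⟨ν l, hν1 l⟩ : ↥(Λᶜ : Set ℤ)) ∈ (univ : Set ↥(Λᶜ : Set ℤ)) :=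
      fun _ => trivial
    set j : ↥Λc → ↥(Λᶜ : Set ℤ) := fun l => ⟨ν l, hν1 l⟩ with hjdef
    have hjinj : Function.Injective j := fun x y hxy => hνinj (by
      simpa [hjdef, Subtype.ext_iff] using hxy)
    have h1 : (∑ l ∈ s, ‖a l‖ ^ 2) = ∑ y ∈ s.image j, β2 (y : ℤ) := by
      rw [Finset.sum_image (fun x _ y _ hxy => hjinj hxy)]
    rw [h1]
    exact Summable.sum_le_tsum _ (fun i _ => hβ2nn _) (hsummable.subtype _)
  have hkey : IS ≤ (1 - min A 1) * Sc := by
    have hsq : IS ^ 2 ≤ Sc * ((1 - min A 1) * IS) :=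
      le_trans (le_trans (pow_le_pow_left₀ hISnn hstep1 2) hstep2)
        (mul_le_mul_of_nonneg_left (le_trans hstep3 hbound) hScnn)
    rcases eq_or_lt_of_le hISnn with h0 | h0
    · rw [← h0]
      have : 0 ≤ 1 - min A 1 := by
        have := min_le_right A 1; linarith
      positivity
    · nlinarith
  constructor
  · show min A 1 * Sc ≤ IT
    linarith [hsplit]
  · show IT ≤ 1 * Sc
    linarith [hsplit]

end main

lemma backward (Λ : Set ℤ) (S : Set ℝ) (hSm : MeasurableSet S) (hS : S ⊆ Ico (0:ℝ) 1)
    (h : IsRieszSeqExp ((fun m : ℤ => (m : ℝ)) '' (Λᶜ : Set ℤ)) (Ico (0:ℝ) 1 \ S)) :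
    IsFrameExp ((fun m : ℤ => (m : ℝ)) '' Λ) S := by
  classical
  obtain ⟨A, B, hA, hAB, hrz⟩ := h
  haveI := finMeas hS
  set Λc : Set ℝ := (fun m : ℤ => (m : ℝ)) '' (Λᶜ : Set ℤ) with hΛc
  have hex : ∀ l : ↥Λc, ∃ m : ℤ, m ∈ (Λᶜ : Set ℤ) ∧ ((m:ℝ)) = (l:ℝ) := fun l => l.2
  choose ν hν1 hν2 using hex
  have hνinj : Function.Injective ν := fun x y hxy =>
    Subtype.ext (by rw [← hν2 x, ← hν2 y, hxy])
  have hrz' := riesz_reform (fun c => (hrz c).1)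
  refine ⟨min A 1, 1, lt_min hA one_pos, min_le_right _ _, ?_⟩
  intro f hf
  obtain ⟨hsummable, htot⟩ := parseval_on S hSm hS f hf
  set β2 : ℤ → ℝ := fun n => ‖∫ x in S, f x * (starRingEnd ℂ) (expf (n:ℝ) x)‖ ^ 2 with hβ2
  have hβ2nn : ∀ n, 0 ≤ β2 n := fun n => sq_nonneg _
  set NF : ℝ := ∫ x in S, ‖f x‖ ^ 2 with hNF
  have hNFnn : 0 ≤ NF := integral_nonneg fun x => sq_nonneg _
  have hA1 : 0 ≤ 1 - min A 1 := by have := min_le_right A 1; linarith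
  -- claim for finite subsets of the complement
  have hclaim : ∀ t : Finset ↥(Λᶜ : Set ℤ), (∑ n ∈ t, β2 ((n : ℤ))) ≤ (1 - min A 1) * NF := by
    intro t
    set j : ↥(Λᶜ : Set ℤ) → ↥Λc := fun n => ⟨((n : ℤ) : ℝ), mem_image_of_mem _ n.2⟩ with hjdef
    have hjinj : Function.Injective j := fun x y hxy => by
      apply Subtype.ext
      have : (((x : ℤ) : ℝ)) = ((y : ℤ) : ℝ) := by
        simpa [hjdef, Subtype.ext_iff] using hxy
      exact_mod_cast this
    set s : Finset ↥Λc := t.image j with hsdef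
    set b : ↥Λc → ℂ := fun l => ∫ x in S, f x * (starRingEnd ℂ) (expf ((l : ℝ)) x) with hb
    set p : ℝ → ℂ := fun x => ∑ l ∈ s, b l * expf (l : ℝ) x with hp
    have hbj : ∀ n : ↥(Λᶜ : Set ℤ), b (j n) = ∫ x in S, f x * (starRingEnd ℂ) (expf ((n:ℤ):ℝ) x) := by
      intro n; rw [hb, hjdef]
    set D : ℝ := ∑ n ∈ t, β2 ((n : ℤ)) with hD
    have hDnn : 0 ≤ D := Finset.sum_nonneg fun n _ => hβ2nn _
    have hsumb : (∑ l ∈ s, ‖b l‖ ^ 2) = D := by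
      rw [hsdef, Finset.sum_image (fun x _ y _ hxy => hjinj hxy), hD]
    -- pointwise integer-frequency form of p
    have hpeq : ∀ x, p x = ∑ l ∈ s, b l * expf ((ν l : ℤ) : ℝ) x := fun x =>
      Finset.sum_congr rfl fun l _ => by rw [hν2 l]
    have hpfun : p = fun x => ∑ l ∈ s, b l * expf ((ν l : ℤ) : ℝ) x := funext hpeq
    have hmem2 : MemLp p 2 (volume.restrict S) := by
      rw [hpfun]; exact memℒp_poly hS s _ _
    have hmemIco : MemLp p 2 (volume.restrict (Ico (0:ℝ) 1)) := by
      rw [hpfun]; exact memℒp_poly Subset.rfl s _ _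
    set IS : ℝ := ∫ x in S, ‖p x‖ ^ 2 with hIS
    set IT : ℝ := ∫ x in Ico (0:ℝ) 1 \ S, ‖p x‖ ^ 2 with hIT
    have hISnn : 0 ≤ IS := integral_nonneg fun x => sq_nonneg _
    have htotal : (∫ x in Ico (0:ℝ) 1, ‖p x‖ ^ 2) = D := by
      rw [hpfun, ← hsumb]
      exact l2_poly s (fun l => (ν l : ℤ)) (hνinj.injOn) _
    have hsplit : D = IS + IT := by
      rw [← htotal]
      exact split_integral hSm hS _ (integrable_norm_sq p hmemIco)
    -- Riesz lower bound
    have hlow : A * D ≤ IT := by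
      have := hrz' s b
      rw [hsumb] at this
      exact this
    -- inner product identity
    have hip : (∫ x in S, f x * (starRingEnd ℂ) (p x)) = ((D : ℝ) : ℂ) := by
      have h2 : ∀ x : ℝ, f x * (starRingEnd ℂ) (p x)
          = f x * (starRingEnd ℂ) (∑ l ∈ s, b l * expf ((ν l : ℤ) : ℝ) x) := fun x => by
        rw [← hpeq x]
      simp_rw [h2]
      rw [integral_mul_conj_poly hS hSm f (hf.integrable one_le_two) s _ _]
      have h3 : ∀ l ∈ s, (starRingEnd ℂ) (b l)
          * (∫ x in S, f x * (starRingEnd ℂ) (expf ((ν l : ℤ) : ℝ) x))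
          = ((‖b l‖ ^ 2 : ℝ) : ℂ) := by
        intro l _
        have h4 : (∫ x in S, f x * (starRingEnd ℂ) (expf ((ν l : ℤ) : ℝ) x)) = b l := by
          rw [hb]
          simp_rw [hν2 l]
        rw [h4, mul_comm, Complex.mul_conj, Complex.normSq_eq_norm_sq]
      rw [Finset.sum_congr rfl h3, ← hsumb]
      push_cast
      rfl
    -- Cauchy–Schwarz
    have hcs : D ^ 2 ≤ NF * IS := by
      have := cs_integral f p hf hmem2
      rw [hip] at this
      simpa using this
    -- combine
    have hIS_le : IS ≤ (1 - min A 1) * D := by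
      have h5 : min A 1 * D ≤ A * D := mul_le_mul_of_nonneg_right (min_le_left _ _) hDnn
      linarith
    have hfin : D ^ 2 ≤ NF * ((1 - min A 1) * D) :=
      le_trans hcs (mul_le_mul_of_nonneg_left hIS_le hNFnn)
    rcases eq_or_lt_of_le hDnn with h0 | h0
    · rw [← h0]; positivity
    · nlinarith
  have hcompl : (∑' n : ↥(Λᶜ : Set ℤ), β2 n) ≤ (1 - min A 1) * NF :=
    Summable.tsum_le_of_sum_le (hsummable.subtype _) hclaim
  have hsplitsum : (∑' n : ↥Λ, β2 n) + (∑' n : ↥(Λᶜ : Set ℤ), β2 n) = NF := by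
    rw [Summable.tsum_add_tsum_compl (hsummable.subtype _) (hsummable.subtype _)]
    exact htot
  have hcompl_nn : 0 ≤ ∑' n : ↥(Λᶜ : Set ℤ), β2 n := tsum_nonneg fun n => hβ2nn _
  have hconv : (∑' l : ↥((fun m : ℤ => (m : ℝ)) '' Λ),
      ‖∫ x in S, f x * (starRingEnd ℂ) (expf (l : ℝ) x)‖ ^ 2) = ∑' n : ↥Λ, β2 n :=
    tsum_image_int Λ (fun y => ‖∫ x in S, f x * (starRingEnd ℂ) (expf y x)‖ ^ 2)
  rw [hconv]
  constructor
  · have : min A 1 * NF ≤ NF - (1 - min A 1) * NF := by nlinarith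
    linarith
  · linarith


/-- `E(Λ)` is a frame for `L²(S)` iff `E(ℤ \ Λ)` is a Riesz sequence
in `L²([0,1) \ S)`. -/
theorem stmt11 (Λ : Set ℤ) (S : Set ℝ) (hSm : MeasurableSet S)
    (hS : S ⊆ Set.Ico (0 : ℝ) 1) :
    IsFrameExp ((fun m : ℤ => (m : ℝ)) '' Λ) S ↔
      IsRieszSeqExp ((fun m : ℤ => (m : ℝ)) '' (Set.univ \ Λ)) (Set.Ico (0 : ℝ) 1 \ S) := by
  have hc : (Set.univ \ Λ) = (Λᶜ : Set ℤ) := (Set.compl_eq_univ_diff Λ).symm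
  rw [hc]
  exact ⟨forward Λ S hSm hS, backward Λ S hSm hS⟩
end

section
/- Let N be a prime number and let 1 ≤ n ≤ N. There exists a constant c' > 0, depending only on N and n, such that for all distinct residues j_1, …, j_n ∈ {1, …, N}, all distinct indices k_1 < k_2 < … < k_n in {0, 1, …, N−1}, and all complex vectors (v_1, …, v_n) ∈ ℂ^n, one has Σ_{ℓ=1}^n |Σ_{r=1}^n v_r e^{−2πi j_ℓ k_r / N}|² ≥ c' Σ_{r=1}^n |v_r|². -/
open MvPolynomial

namespace Stmt15Aux

/-- Substituting `X a ↦ X b` changes a polynomial by a multiple of `X a - X b`. -/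
lemma dvd_sub_subst {σ : Type*} [DecidableEq σ] (a b : σ) (P : MvPolynomial σ ℤ) :
    (X a - X b : MvPolynomial σ ℤ) ∣
      P - aeval (fun i => if i = a then X b else X i) P := by
  set f : σ → MvPolynomial σ ℤ := fun i => if i = a then X b else X i with hf
  induction P using MvPolynomial.induction_on with
  | C r => simp [f]
  | add p q hp hq =>
    have := dvd_add hp hq
    rw [map_add]
    convert this using 1
    ring
  | mul_X p i hp =>
    rw [map_mul, aeval_X]
    have key : p * X i - aeval f p * f i
        = (p - aeval f p) * X i + aeval f p * (X i - f i) := by ring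
    rw [key]
    refine dvd_add (Dvd.dvd.mul_right hp _) (Dvd.dvd.mul_left ?_ _)
    by_cases hia : i = a
    · subst hia; simp [f]
    · simp [f, hia]

/-- `X b - X a` is prime in a multivariate polynomial ring over `ℤ`. -/
lemma prime_X_sub_X {σ : Type*} [DecidableEq σ] {a b : σ} (h : a ≠ b) :
    Prime (X b - X a : MvPolynomial σ ℤ) := by
  let e : σ ≃ Option {i : σ // i ≠ b} := (Equiv.optionSubtypeNe b).symm
  let E := (renameEquiv ℤ e).trans (optionEquivLeft ℤ {i : σ // i ≠ b})
  rw [← MulEquiv.prime_iff E.toMulEquiv]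
  have hb : e b = none := Equiv.optionSubtypeNe_symm_self b
  have ha : e a = some ⟨a, h⟩ := Equiv.optionSubtypeNe_symm_of_ne h
  have : E (X b - X a) = Polynomial.X - Polynomial.C (X ⟨a, h⟩) := by
    simp only [E, AlgEquiv.trans_apply, map_sub, renameEquiv_apply, rename_X, hb, ha,
      optionEquivLeft_X_none, optionEquivLeft_X_some]
  rw [show E.toMulEquiv (X b - X a) = E (X b - X a) from rfl, this]
  exact Polynomial.prime_X_sub_C _

/-- Product of pairwise-nondividing primes each dividing `D` divides `D`. -/
lemma prod_primes_dvd' {R : Type*} [CommRing R] [IsDomain R] {ι : Type*} [DecidableEq ι]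
    (s : Finset ι) (f : ι → R) {D : R}
    (hp : ∀ i ∈ s, Prime (f i)) (hdvd : ∀ i ∈ s, f i ∣ D)
    (hnd : ∀ i ∈ s, ∀ j ∈ s, i ≠ j → ¬ (f i ∣ f j)) : (∏ i ∈ s, f i) ∣ D := by
  classical
  induction s using Finset.induction_on generalizing D with
  | empty => simp
  | @insert a s ha ih =>
    obtain ⟨D', rfl⟩ := hdvd a (Finset.mem_insert_self a s)
    rw [Finset.prod_insert ha]
    refine mul_dvd_mul_left _ (ih (fun i hi => hp i (Finset.mem_insert_of_mem hi)) ?_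
      (fun i hi j hj hij => hnd i (Finset.mem_insert_of_mem hi) j
        (Finset.mem_insert_of_mem hj) hij))
    intro i hi
    have hia : i ≠ a := fun hh => ha (hh ▸ hi)
    have hPi := hp i (Finset.mem_insert_of_mem hi)
    have := hdvd i (Finset.mem_insert_of_mem hi)
    rcases hPi.dvd_or_dvd this with h1 | h2
    · exact absurd h1 (hnd i (Finset.mem_insert_of_mem hi) a (Finset.mem_insert_self a s) hia)
    · exact h2

def pairs (n : ℕ) : Finset (Fin n × Fin n) := Finset.univ.filter fun p => p.1 < p.2

noncomputable def Vpoly (n : ℕ) : MvPolynomial (Fin n) ℤ :=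
  ∏ p ∈ pairs n, (X p.2 - X p.1)

noncomputable def Dpoly {n : ℕ} (k : Fin n → ℕ) : MvPolynomial (Fin n) ℤ :=
  Matrix.det (Matrix.of fun l r : Fin n => (X l : MvPolynomial (Fin n) ℤ) ^ k r)

lemma prod_pairs {n : ℕ} {M : Type*} [CommMonoid M] (f : Fin n → Fin n → M) :
    ∏ p ∈ pairs n, f p.1 p.2 = ∏ i, ∏ j ∈ Finset.Ioi i, f i j := by
  rw [pairs, Finset.prod_filter, ← Finset.univ_product_univ, Finset.prod_product]
  refine Finset.prod_congr rfl fun i _ => ?_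
  rw [← Finset.filter_lt_eq_Ioi, Finset.prod_filter]

lemma not_dvd_X_sub_X {n : ℕ} {a b c d : Fin n} (hab : a < b) (hcd : c < d)
    (hne : (a, b) ≠ (c, d)) :
    ¬ ((X b - X a : MvPolynomial (Fin n) ℤ) ∣ (X d - X c)) := by
  have hex : ∃ e : Fin n, (e = c ∨ e = d) ∧ e ≠ a ∧ e ≠ b := by
    by_cases h1 : d ≠ a ∧ d ≠ b
    · exact ⟨d, Or.inr rfl, h1.1, h1.2⟩
    · by_cases h2 : c ≠ a ∧ c ≠ b
      · exact ⟨c, Or.inl rfl, h2.1, h2.2⟩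
      · exfalso
        rw [not_and_or, not_ne_iff, not_ne_iff] at h1 h2
        rcases h1 with h1 | h1 <;> rcases h2 with h2 | h2 <;> subst h1 <;> subst h2
        · exact absurd hcd (lt_irrefl _)
        · exact absurd (hab.trans hcd) (lt_irrefl _)
        · exact hne rfl
        · exact absurd hcd (lt_irrefl _)
  obtain ⟨e, he, hea, heb⟩ := hex
  intro hdvd
  have h2 := map_dvd
    (MvPolynomial.eval (fun i : Fin n => if i = e then (1 : ℤ) else 0)) hdvd
  rw [map_sub, map_sub, eval_X, eval_X, eval_X, eval_X,
    if_neg (fun h : b = e => heb h.symm), if_neg (fun h : a = e => hea h.symm),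
    sub_zero] at h2
  have : ((if d = e then (1:ℤ) else 0) - (if c = e then (1:ℤ) else 0)) = 1 ∨
      ((if d = e then (1:ℤ) else 0) - (if c = e then (1:ℤ) else 0)) = -1 := by
    rcases he with rfl | rfl
    · rw [if_neg (fun h : d = e => absurd (h ▸ hcd) (lt_irrefl _)), if_pos rfl]
      right; ring
    · rw [if_pos rfl, if_neg (fun h : c = e => absurd (h ▸ hcd) (lt_irrefl _))]
      left; ring
  rw [zero_dvd_iff] at h2
  rcases this with h | h <;> rw [h2] at h <;> norm_num at h


lemma Vpoly_dvd_Dpoly {n : ℕ} (k : Fin n → ℕ) : Vpoly n ∣ Dpoly k := by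
  classical
  refine prod_primes_dvd' (pairs n) (fun p => X p.2 - X p.1) ?_ ?_ ?_
  · intro p hp
    exact prime_X_sub_X (Finset.mem_filter.mp hp).2.ne
  · intro p hp
    have hlt : p.1 < p.2 := (Finset.mem_filter.mp hp).2
    have hsub := dvd_sub_subst p.1 p.2 (Dpoly k)
    have hzero : aeval (fun i => if i = p.1 then X p.2 else X i : Fin n → MvPolynomial (Fin n) ℤ) (Dpoly k) = 0 := by
      rw [Dpoly, AlgHom.map_det]
      apply Matrix.det_zero_of_row_eq hlt.ne
      funext r
      simp only [AlgHom.mapMatrix_apply, Matrix.map_apply, Matrix.of_apply, map_pow, aeval_X,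
        if_pos rfl, if_neg hlt.ne']
      simp
    have hdvd : (X p.1 - X p.2 : MvPolynomial (Fin n) ℤ) ∣ Dpoly k := by
      rw [hzero, sub_zero] at hsub; exact hsub
    show (X p.2 - X p.1 : MvPolynomial (Fin n) ℤ) ∣ Dpoly k
    rw [show (X p.2 - X p.1 : MvPolynomial (Fin n) ℤ) = -(X p.1 - X p.2) by ring]
    exact (neg_dvd).mpr hdvd
  · intro p hp q hq hpq
    have h1 : p.1 < p.2 := (Finset.mem_filter.mp hp).2
    have h2 : q.1 < q.2 := (Finset.mem_filter.mp hq).2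
    refine not_dvd_X_sub_X h1 h2 ?_
    simpa using hpq

lemma mem_pairs {n : ℕ} {p : Fin n × Fin n} : p ∈ pairs n ↔ p.1 < p.2 := by
  simp [pairs]


lemma aeval_Dpoly {n : ℕ} {A : Type*} [CommRing A] (f : Fin n → A) (k : Fin n → ℕ) :
    aeval f (Dpoly k) = Matrix.det (Matrix.of fun l r : Fin n => f l ^ k r) := by
  rw [Dpoly, AlgHom.map_det]
  congr 1
  funext l r
  simp [AlgHom.mapMatrix_apply, Matrix.map_apply]

lemma aeval_Vpoly {n : ℕ} {A : Type*} [CommRing A] (f : Fin n → A) :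
    aeval f (Vpoly n) = ∏ p ∈ pairs n, (f p.2 - f p.1) := by
  rw [Vpoly, map_prod]
  simp

lemma det_pow_succ {n : ℕ} {A : Type*} [CommRing A] (u : Fin n → A) :
    Matrix.det (Matrix.of fun l r : Fin n => u r ^ ((l : ℕ) + 1)) =
      (∏ r, u r) * ∏ p ∈ pairs n, (u p.2 - u p.1) := by
  rw [← Matrix.det_transpose]
  have h : (Matrix.of fun l r : Fin n => u r ^ ((l : ℕ) + 1)).transpose
      = Matrix.of (fun i j : Fin n => u i * Matrix.vandermonde u i j) := by
    ext i j
    simp [Matrix.vandermonde, pow_succ, mul_comm]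
  rw [h, Matrix.det_mul_column, Matrix.det_vandermonde, prod_pairs (fun i j => u j - u i)]

lemma pow_sub_pow_factor (a b : ℕ) (hab : a ≤ b) :
    (Polynomial.X ^ b - Polynomial.X ^ a : Polynomial ℤ)
      = (Polynomial.X - 1) *
        (Polynomial.X ^ a * ∑ i ∈ Finset.range (b - a), Polynomial.X ^ i) := by
  have h := geom_sum_mul (Polynomial.X : Polynomial ℤ) (b - a)
  calc (Polynomial.X ^ b - Polynomial.X ^ a : Polynomial ℤ)
      = Polynomial.X ^ a * (Polynomial.X ^ (b - a) - 1) := by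
        rw [mul_sub, mul_one, ← pow_add, Nat.add_sub_cancel' hab]
    _ = Polynomial.X ^ a * ((∑ i ∈ Finset.range (b - a), Polynomial.X ^ i) *
          (Polynomial.X - 1)) := by rw [h]
    _ = _ := by ring

lemma prod_pow_sub_pow {n : ℕ} (g : Fin n → ℕ) (hg : StrictMono g) :
    (∏ p ∈ pairs n, ((Polynomial.X : Polynomial ℤ) ^ g p.2 - Polynomial.X ^ g p.1))
      = (Polynomial.X - 1) ^ (pairs n).card *
        ∏ p ∈ pairs n, (Polynomial.X ^ g p.1 *
          ∑ i ∈ Finset.range (g p.2 - g p.1), Polynomial.X ^ i) := by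
  rw [← Finset.prod_const, ← Finset.prod_mul_distrib]
  exact Finset.prod_congr rfl fun p hp =>
    pow_sub_pow_factor _ _ (hg (mem_pairs.mp hp)).le


lemma key_eval {n N : ℕ} (hN : N.Prime) (k : Fin n → ℕ) (hk : StrictMono k)
    (hkN : ∀ r, k r < N) {Q : MvPolynomial (Fin n) ℤ} (hQ : Dpoly k = Vpoly n * Q) :
    ¬ ((N : ℤ) ∣ MvPolynomial.eval (fun _ => (1 : ℤ)) Q) := by
  classical
  set Φ : MvPolynomial (Fin n) ℤ →ₐ[ℤ] Polynomial ℤ :=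
    aeval (fun l : Fin n => (Polynomial.X : Polynomial ℤ) ^ ((l : ℕ) + 1)) with hΦ
  have hmono : StrictMono (fun l : Fin n => (l : ℕ) + 1) := fun x y h => by
    have hxy : (x : ℕ) < (y : ℕ) := h
    show (x : ℕ) + 1 < (y : ℕ) + 1
    omega
  have hD : Φ (Dpoly k) =
      (Polynomial.X - 1) ^ (pairs n).card *
        ((∏ r, (Polynomial.X : Polynomial ℤ) ^ k r) *
          ∏ p ∈ pairs n, (Polynomial.X ^ k p.1 *
            ∑ i ∈ Finset.range (k p.2 - k p.1), Polynomial.X ^ i)) := by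
    rw [hΦ]; erw [aeval_Dpoly]
    have heq : (Matrix.of fun l r : Fin n => ((Polynomial.X : Polynomial ℤ) ^ ((l:ℕ)+1)) ^ k r)
        = Matrix.of fun l r : Fin n => ((Polynomial.X : Polynomial ℤ) ^ k r) ^ ((l:ℕ)+1) :=
      Matrix.ext fun l r => by
        rw [Matrix.of_apply, Matrix.of_apply, ← pow_mul, ← pow_mul, mul_comm]
    rw [heq, det_pow_succ, prod_pow_sub_pow k hk]
    ring
  have hV : Φ (Vpoly n) = (Polynomial.X - 1) ^ (pairs n).card *
      ∏ p ∈ pairs n, (Polynomial.X ^ ((p.1:ℕ)+1) *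
        ∑ i ∈ Finset.range (((p.2:ℕ)+1) - ((p.1:ℕ)+1)), Polynomial.X ^ i) := by
    rw [hΦ]; erw [aeval_Vpoly]
    exact prod_pow_sub_pow (fun l : Fin n => (l:ℕ)+1) hmono
  have hEq := congrArg Φ hQ
  rw [map_mul, hD, hV, mul_assoc] at hEq
  have hXne : (Polynomial.X - 1 : Polynomial ℤ) ≠ 0 := by
    simpa using Polynomial.X_sub_C_ne_zero (1:ℤ)
  have hcan := mul_left_cancel₀ (pow_ne_zero (pairs n).card hXne) hEq
  have hcomp : Polynomial.eval (1:ℤ) (Φ Q) = MvPolynomial.eval (fun _ => (1:ℤ)) Q := by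
    have hh : (Polynomial.evalRingHom (1:ℤ)).comp Φ.toRingHom
        = MvPolynomial.eval (fun _ : Fin n => (1:ℤ)) := by
      apply MvPolynomial.ringHom_ext
      · intro r; simp [hΦ]
      · intro i; simp [hΦ]
    exact RingHom.congr_fun hh Q
  have h1 := congrArg (Polynomial.eval (1:ℤ)) hcan
  simp only [Polynomial.eval_mul, Polynomial.eval_prod, Polynomial.eval_pow,
    Polynomial.eval_X, Polynomial.eval_finset_sum, one_pow, Finset.sum_const,
    Finset.card_range, nsmul_eq_mul, mul_one, one_mul, Finset.prod_const_one,
    hcomp] at h1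
  intro hdvd
  have hNprime : Prime (N : ℤ) := Nat.prime_iff_prime_int.mp hN
  have hdvd2 : (N:ℤ) ∣ ∏ p ∈ pairs n, ((k p.2 - k p.1 : ℕ) : ℤ) := by
    rw [h1]
    exact Dvd.dvd.mul_left hdvd _
  obtain ⟨p, hp, hpd⟩ := (hNprime.dvd_finset_prod_iff _).mp hdvd2
  rw [Int.natCast_dvd_natCast] at hpd
  have h0 : 0 < k p.2 - k p.1 := Nat.sub_pos_of_lt (hk (mem_pairs.mp hp))
  have hle := Nat.le_of_dvd h0 hpd
  have := hkN p.2
  omega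

lemma mod_inj_Icc {N a b : ℕ} (h1 : 1 ≤ a) (h2 : a ≤ N) (h3 : 1 ≤ b) (h4 : b ≤ N)
    (h : a % N = b % N) : a = b := by
  rcases eq_or_lt_of_le h2 with rfl | ha2
  · rcases eq_or_lt_of_le h4 with rfl | hb2
    · rfl
    · rw [Nat.mod_self, Nat.mod_eq_of_lt hb2] at h; omega
  · rcases eq_or_lt_of_le h4 with rfl | hb2
    · rw [Nat.mod_self, Nat.mod_eq_of_lt ha2] at h; omega
    · rw [Nat.mod_eq_of_lt ha2, Nat.mod_eq_of_lt hb2] at h; omega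

/-- **Chebotarëv's theorem on roots of unity.** -/
theorem cheb_det_ne_zero {N n : ℕ} (hN : N.Prime) (k : Fin n → ℕ) (hk : StrictMono k)
    (hkN : ∀ r, k r < N) (j : Fin n → ℕ) (hj : ∀ l, j l ∈ Finset.Icc 1 N)
    (hjinj : Function.Injective j) {ζ : ℂ} (hζ : IsPrimitiveRoot ζ N) :
    Matrix.det (Matrix.of fun l r : Fin n => ζ ^ (j l * k r)) ≠ 0 := by
  classical
  haveI : Fact N.Prime := ⟨hN⟩
  have hNpos : 0 < N := hN.pos
  obtain ⟨Q, hQ⟩ := Vpoly_dvd_Dpoly k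
  intro hdet
  have hΨD : aeval (fun l : Fin n => ζ ^ j l) (Dpoly k) = 0 := by
    rw [aeval_Dpoly, ← hdet]
    congr 1
    exact Matrix.ext fun l r => by rw [Matrix.of_apply, Matrix.of_apply, ← pow_mul]
  have hΨV : aeval (fun l : Fin n => ζ ^ j l) (Vpoly n) ≠ 0 := by
    rw [aeval_Vpoly]
    refine Finset.prod_ne_zero_iff.mpr fun p hp => ?_
    rw [sub_ne_zero]
    intro h
    have h1 := Finset.mem_Icc.mp (hj p.1)
    have h2 := Finset.mem_Icc.mp (hj p.2)
    have hne0 : ζ ≠ 0 := hζ.ne_zero hNpos.ne'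
    have key : ∀ a b : ℕ, a ≤ b → 1 ≤ a → b ≤ N → ζ ^ b = ζ ^ a → b = a := by
      intro a b hab ha hb hpow
      have hsplit : ζ ^ a * ζ ^ (b - a) = ζ ^ a * 1 := by
        rw [mul_one, ← pow_add, Nat.add_sub_cancel' hab, hpow]
      have hone : ζ ^ (b - a) = 1 := mul_left_cancel₀ (pow_ne_zero a hne0) hsplit
      have hdvd := (hζ.pow_eq_one_iff_dvd _).mp hone
      have := Nat.eq_zero_of_dvd_of_lt hdvd (by omega : b - a < N)
      omega
    have heq : j p.2 = j p.1 := by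
      rcases le_total (j p.1) (j p.2) with hle | hle
      · exact key _ _ hle h1.1 h2.2 h
      · exact (key _ _ hle h2.1 h1.2 h.symm).symm
    exact absurd (hjinj heq) (mem_pairs.mp hp).ne'
  have hΨQ : aeval (fun l : Fin n => ζ ^ j l) Q = 0 := by
    have hh := congrArg (aeval (fun l : Fin n => ζ ^ j l)) hQ
    rw [map_mul, hΨD] at hh
    rcases mul_eq_zero.mp hh.symm with h | h
    · exact absurd h hΨV
    · exact h
  set R : Polynomial ℤ :=
    aeval (fun l : Fin n => (Polynomial.X : Polynomial ℤ) ^ j l) Q with hR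
  have hRζ : Polynomial.aeval ζ R = 0 := by
    have hh : ((Polynomial.aeval ζ : Polynomial ℤ →ₐ[ℤ] ℂ) :
          Polynomial ℤ →+* ℂ).comp
        ((aeval (fun l : Fin n => (Polynomial.X : Polynomial ℤ) ^ j l) :
          MvPolynomial (Fin n) ℤ →ₐ[ℤ] Polynomial ℤ) : MvPolynomial (Fin n) ℤ →+* Polynomial ℤ)
        = ((aeval (fun l : Fin n => ζ ^ j l) : MvPolynomial (Fin n) ℤ →ₐ[ℤ] ℂ) :
          MvPolynomial (Fin n) ℤ →+* ℂ) := by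
      apply MvPolynomial.ringHom_ext <;> intro x <;> simp
    have h2 := RingHom.congr_fun hh Q
    simp only [RingHom.coe_comp, Function.comp_apply, RingHom.coe_coe] at h2
    rw [hR, h2, hΨQ]
  have hint : IsIntegral ℤ ζ := hζ.isIntegral hNpos
  have hdvd : minpoly ℤ ζ ∣ R := minpoly.isIntegrallyClosed_dvd hint hRζ
  rw [← Polynomial.cyclotomic_eq_minpoly hζ hNpos] at hdvd
  have hdvd1 : (N : ℤ) ∣ Polynomial.eval 1 R := by
    have h3 := map_dvd (Polynomial.evalRingHom (1:ℤ)) hdvd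
    rwa [Polynomial.coe_evalRingHom, Polynomial.eval_one_cyclotomic_prime] at h3
  have hcomp : Polynomial.eval (1:ℤ) R = MvPolynomial.eval (fun _ => (1:ℤ)) Q := by
    have hh : (Polynomial.evalRingHom (1:ℤ)).comp
        ((aeval (fun l : Fin n => (Polynomial.X : Polynomial ℤ) ^ j l) :
          MvPolynomial (Fin n) ℤ →ₐ[ℤ] Polynomial ℤ) : MvPolynomial (Fin n) ℤ →+* Polynomial ℤ)
        = MvPolynomial.eval (fun _ : Fin n => (1:ℤ)) := by
      apply MvPolynomial.ringHom_ext <;> intro x <;> simp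
    exact RingHom.congr_fun hh Q
  exact key_eval hN k hk hkN hQ (hcomp ▸ hdvd1)

lemma matrix_bound {n : ℕ} (hn : 0 < n) (A : Matrix (Fin n) (Fin n) ℂ) (hA : A.det ≠ 0) :
    ∃ c : ℝ, 0 < c ∧ ∀ v : Fin n → ℂ,
      c * ∑ r, ‖v r‖ ^ 2 ≤ ∑ l, ‖∑ r, v r * A l r‖ ^ 2 := by
  classical
  have hU : IsUnit A.det := isUnit_iff_ne_zero.mpr hA
  obtain ⟨B, hBA⟩ : ∃ B : Matrix (Fin n) (Fin n) ℂ, B * A = 1 :=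
    ⟨A⁻¹, Matrix.nonsing_inv_mul A hU⟩
  set S : ℝ := ∑ l, ∑ r, ‖B l r‖ ^ 2 with hS
  have i0 : Fin n := ⟨0, hn⟩
  have hSpos : 0 < S := by
    rw [hS]
    have h1 : (B * A) i0 i0 = 1 := by rw [hBA]; simp
    have hex : ∃ r, B i0 r ≠ 0 := by
      by_contra hz
      push_neg at hz
      rw [Matrix.mul_apply] at h1
      simp [hz] at h1
    obtain ⟨r0, hr0⟩ := hex
    have h2 : (0:ℝ) < ‖B i0 r0‖ ^ 2 := pow_pos (norm_pos_iff.mpr hr0) 2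
    refine lt_of_lt_of_le h2 ?_
    calc ‖B i0 r0‖ ^ 2 ≤ ∑ r, ‖B i0 r‖ ^ 2 :=
          Finset.single_le_sum (f := fun r => ‖B i0 r‖ ^ 2)
            (fun r _ => by positivity) (Finset.mem_univ r0)
      _ ≤ S := by
          rw [hS]
          exact Finset.single_le_sum (f := fun l => ∑ r, ‖B l r‖ ^ 2)
            (fun l _ => Finset.sum_nonneg fun r _ => sq_nonneg _) (Finset.mem_univ i0)
  refine ⟨S⁻¹, inv_pos.mpr hSpos, fun v => ?_⟩
  set w : Fin n → ℂ := fun l => ∑ r, v r * A l r with hw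
  have hvw : ∀ l, v l = ∑ r, B l r * w r := by
    intro l
    have hmv : (B.mulVec (A.mulVec v)) l = v l := by
      rw [Matrix.mulVec_mulVec, hBA, Matrix.one_mulVec]
    rw [← hmv, Matrix.mulVec, dotProduct]
    refine Finset.sum_congr rfl fun r _ => ?_
    congr 1
    rw [hw, Matrix.mulVec, dotProduct]
    exact Finset.sum_congr rfl fun s _ => mul_comm _ _
  have key : ∑ r, ‖v r‖ ^ 2 ≤ S * ∑ r, ‖w r‖ ^ 2 := by
    have hl : ∀ l, ‖v l‖ ^ 2 ≤ (∑ r, ‖B l r‖ ^ 2) * ∑ r, ‖w r‖ ^ 2 := by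
      intro l
      have h1 : ‖v l‖ ≤ ∑ r, ‖B l r‖ * ‖w r‖ := by
        rw [hvw l]
        refine (norm_sum_le _ _).trans (le_of_eq ?_)
        exact Finset.sum_congr rfl fun r _ => norm_mul _ _
      have h2 : ‖v l‖ ^ 2 ≤ (∑ r, ‖B l r‖ * ‖w r‖) ^ 2 :=
        pow_le_pow_left₀ (norm_nonneg _) h1 2
      exact h2.trans (Finset.sum_mul_sq_le_sq_mul_sq Finset.univ _ _)
    calc ∑ l, ‖v l‖ ^ 2 ≤ ∑ l, ((∑ r, ‖B l r‖ ^ 2) * ∑ r, ‖w r‖ ^ 2) :=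
          Finset.sum_le_sum fun l _ => hl l
      _ = S * ∑ r, ‖w r‖ ^ 2 := by rw [hS, Finset.sum_mul]
  calc S⁻¹ * ∑ r, ‖v r‖ ^ 2 ≤ S⁻¹ * (S * ∑ r, ‖w r‖ ^ 2) :=
        mul_le_mul_of_nonneg_left key (inv_pos.mpr hSpos).le
    _ = ∑ r, ‖w r‖ ^ 2 := by field_simp
    _ = ∑ l, ‖∑ r, v r * A l r‖ ^ 2 := by simp only [hw]

end Stmt15Aux

open Real

/-- A uniform lower bound, depending only on the prime `N` and on `n`, for
`n × n` submatrices of the `N × N` discrete Fourier matrix (Chebotarëv's theorem on roots of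
unity gives their invertibility). -/
theorem stmt15 (N : ℕ) (hN : N.Prime) (n : ℕ) (hn1 : 1 ≤ n) (hnN : n ≤ N) :
    ∃ c' : ℝ, 0 < c' ∧
      ∀ (j : Fin n → ℕ), (∀ l, j l ∈ Finset.Icc 1 N) → Function.Injective j →
      ∀ (k : Fin n → ℕ), (∀ r, k r < N) → StrictMono k →
      ∀ v : Fin n → ℂ,
        c' * ∑ r, ‖v r‖ ^ 2 ≤
          ∑ l, ‖∑ r, v r * Complex.exp (-(2 * (Real.pi : ℂ) * Complex.I *
            ((j l : ℂ) * (k r : ℂ))) / (N : ℂ))‖ ^ 2 := by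
  classical
  have hNpos : 0 < N := hN.pos
  set ζ : ℂ := Complex.exp (-(2 * (Real.pi : ℂ) * Complex.I) / N) with hζdef
  have hζ : IsPrimitiveRoot ζ N := by
    have h0 := Complex.isPrimitiveRoot_exp N hNpos.ne'
    have hinv := h0.inv
    have : ζ = (Complex.exp (2 * Real.pi * Complex.I / N))⁻¹ := by
      rw [← Complex.exp_neg, hζdef]
      congr 1
      ring
    rwa [this]
  have hexp : ∀ a b : ℕ,
      Complex.exp (-(2 * (Real.pi : ℂ) * Complex.I * ((a : ℂ) * (b : ℂ))) / (N : ℂ))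
        = ζ ^ (a * b) := by
    intro a b
    rw [hζdef, ← Complex.exp_nat_mul]
    congr 1
    push_cast
    ring
  -- a uniform constant over all configurations
  have main : ∀ g : (Fin n → Fin (N + 1)) × (Fin n → Fin N), ∃ c : ℝ, 0 < c ∧
      (((∀ l, (g.1 l : ℕ) ∈ Finset.Icc 1 N) ∧ Function.Injective (fun l => (g.1 l : ℕ)) ∧
          StrictMono (fun r => (g.2 r : ℕ))) →
        ∀ v : Fin n → ℂ, c * ∑ r, ‖v r‖ ^ 2 ≤
          ∑ l, ‖∑ r, v r * ζ ^ ((g.1 l : ℕ) * (g.2 r : ℕ))‖ ^ 2) := by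
    intro g
    by_cases hg : (∀ l, (g.1 l : ℕ) ∈ Finset.Icc 1 N) ∧
        Function.Injective (fun l => (g.1 l : ℕ)) ∧ StrictMono (fun r => (g.2 r : ℕ))
    · have hdet := Stmt15Aux.cheb_det_ne_zero hN (fun r => (g.2 r : ℕ)) hg.2.2
        (fun r => (g.2 r).isLt) (fun l => (g.1 l : ℕ)) hg.1 hg.2.1 hζ
      obtain ⟨c, hc, hP⟩ := Stmt15Aux.matrix_bound hn1
        (Matrix.of fun l r : Fin n => ζ ^ ((g.1 l : ℕ) * (g.2 r : ℕ))) hdet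
      exact ⟨c, hc, fun _ v => hP v⟩
    · exact ⟨1, one_pos, fun h => absurd h hg⟩
  choose F hF0 hF using main
  haveI : NeZero N := ⟨hNpos.ne'⟩
  have hne : (Finset.univ : Finset ((Fin n → Fin (N + 1)) × (Fin n → Fin N))).Nonempty :=
    Finset.univ_nonempty
  refine ⟨Finset.univ.inf' hne F, ?_, ?_⟩
  · rw [Finset.lt_inf'_iff]
    exact fun g _ => hF0 g
  · intro j hj hjinj k hkN hk v
    set g : (Fin n → Fin (N + 1)) × (Fin n → Fin N) :=
      (fun l => ⟨j l, by have := (Finset.mem_Icc.mp (hj l)).2; omega⟩,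
       fun r => ⟨k r, hkN r⟩) with hg
    have hstep := hF g ⟨fun l => hj l, hjinj, hk⟩ v
    have hsum : ∑ l, ‖∑ r, v r * ζ ^ ((g.1 l : ℕ) * (g.2 r : ℕ))‖ ^ 2
        = ∑ l, ‖∑ r, v r * Complex.exp (-(2 * (Real.pi : ℂ) * Complex.I *
            ((j l : ℂ) * (k r : ℂ))) / (N : ℂ))‖ ^ 2 := by
      refine Finset.sum_congr rfl fun l _ => ?_
      congr 1
      refine congrArg _ (Finset.sum_congr rfl fun r _ => ?_)
      rw [hexp (j l) (k r)]
    rw [hsum] at hstep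
    refine le_trans ?_ hstep
    have hle : Finset.univ.inf' hne F ≤ F g := Finset.inf'_le F (Finset.mem_univ g)
    exact mul_le_mul_of_nonneg_right hle
      (Finset.sum_nonneg fun r _ => sq_nonneg _)
end
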